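/- If f ∈ C(𝕋), (n_j) is a strictly increasing sequence, A ⊆ 𝕋, and (s_{n_j}f)_j converges pointwise on A to a function h, then the set {t ∈ A : h(t) ≠ f(t)} is of first category in 𝕋. -/

import Mathlib

open MeasureTheory Complex Filter Topology Set TopologicalSpace

noncomputable section

instance : Fact (0 < 2 * Real.pi) := ⟨by positivity⟩

/-- The unit circle ℝ/2πℤ. -/
abbrev UnitCircle := AddCircle (2 * Real.pi)

/-- The n-th partial sum of the Fourier series of `f`. -/
noncomputable def partialSum (n : ℕ) (f : UnitCircle → ℂ) : C(UnitCircle, ℂ) :=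
  ∑ k ∈ Finset.Icc (-(n : ℤ)) (n : ℤ), fourierCoeff f k • fourier k

open AddCircle in
/-- The Fourier partial sums of a continuous function converge to it in `L²`. -/
lemma tendsto_eLpNorm_partialSum (f : C(UnitCircle, ℂ)) :
    Tendsto (fun N : ℕ => eLpNorm (fun t => partialSum N ⇑f t - f t) 2 haarAddCircle)
      atTop (𝓝 0) := by
  set T : C(UnitCircle, ℂ) →L[ℂ] Lp ℂ 2 (haarAddCircle (T := 2 * Real.pi)) :=
    ContinuousMap.toLp (E := ℂ) 2 haarAddCircle ℂ with hT
  have hsum := hasSum_fourier_series_L2 (T f)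
  have hcoeff : ∀ i : ℤ, fourierCoeff (↑(T f) : UnitCircle → ℂ) i = fourierCoeff (⇑f) i :=
    fun i => fourierCoeff_toLp f i
  simp only [hcoeff] at hsum
  have hmono : Monotone (fun N : ℕ => Finset.Icc (-(N : ℤ)) (N : ℤ)) := by
    intro a b hab
    exact Finset.Icc_subset_Icc (by exact_mod_cast neg_le_neg (Int.ofNat_le.mpr hab))
      (by exact_mod_cast hab)
  have hIcc : Tendsto (fun N : ℕ => Finset.Icc (-(N : ℤ)) (N : ℤ)) atTop atTop :=
    tendsto_atTop_finset_of_monotone hmono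
      (fun x => ⟨x.natAbs, by simp only [Finset.mem_Icc]; omega⟩)
  have h2 : Tendsto (fun N : ℕ => T (partialSum N ⇑f)) atTop (𝓝 (T f)) := by
    have := hsum.comp hIcc
    convert this using 2 with N
    rw [partialSum, map_sum]
    refine Finset.sum_congr rfl fun k _ => ?_
    rw [_root_.map_smul]
  have h3 : Tendsto (fun N : ℕ => ‖T (partialSum N ⇑f) - T f‖) atTop (𝓝 0) :=
    tendsto_iff_norm_sub_tendsto_zero.1 h2
  have h4 := ENNReal.tendsto_ofReal h3
  rw [ENNReal.ofReal_zero] at h4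
  convert h4 using 2 with N
  rw [Lp.norm_def, ENNReal.ofReal_toReal (Lp.eLpNorm_ne_top _)]
  apply eLpNorm_congr_ae
  filter_upwards [Lp.coeFn_sub (T (partialSum N ⇑f)) (T f),
    ContinuousMap.coeFn_toLp (p := 2) (𝕜 := ℂ) AddCircle.haarAddCircle (partialSum N ⇑f),
    ContinuousMap.coeFn_toLp (p := 2) (𝕜 := ℂ) AddCircle.haarAddCircle f] with t h1 hp hf
  simp only [h1, Pi.sub_apply]
  simp only [hT, hp, hf]

lemma isMeagre_of_closed_empty_interior {s : Set UnitCircle} (hc : IsClosed s)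
    (hi : interior s = ∅) : IsMeagre s :=
  isMeagre_iff_countable_union_isNowhereDense.mpr
    ⟨{s}, by simpa [IsNowhereDense, hc.closure_eq] using hi, countable_singleton s, by simp⟩

/-- If `(s_{n_j} f)_j` converges pointwise on `A` to `h`, then `{t ∈ A | h t ≠ f t}`
is of first category (meager) in `𝕋`. -/
theorem stmt2 (f : C(UnitCircle, ℂ)) (n : ℕ → ℕ) (hn : StrictMono n)
    (A : Set UnitCircle) (h : UnitCircle → ℂ)
    (hconv : ∀ t ∈ A, Tendsto (fun j => partialSum (n j) ⇑f t) atTop (𝓝 (h t))) :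
    IsMeagre {t | t ∈ A ∧ h t ≠ f t} := by
  classical
  set μ := AddCircle.haarAddCircle (T := 2 * Real.pi) with hμ
  -- the closed sets
  set F : ℕ → ℕ → Set UnitCircle := fun m J =>
    {t | ∀ j, J ≤ j → ((m : ℝ) + 1)⁻¹ ≤ ‖partialSum (n j) ⇑f t - f t‖} with hF
  have hFclosed : ∀ m J, IsClosed (F m J) := by
    intro m J
    have : F m J = ⋂ j ∈ {j | J ≤ j}, {t | ((m : ℝ) + 1)⁻¹ ≤ ‖partialSum (n j) ⇑f t - f t‖} := by
      ext t; simp [hF]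
    rw [this]
    refine isClosed_biInter fun j _ => isClosed_le continuous_const ?_
    exact ((partialSum (n j) ⇑f).continuous.sub f.continuous).norm
  -- the L² convergence along the subsequence
  have hL2 : Tendsto (fun j : ℕ => eLpNorm (fun t => partialSum (n j) ⇑f t - f t) 2 μ)
      atTop (𝓝 0) := (tendsto_eLpNorm_partialSum f).comp hn.tendsto_atTop
  -- each F m J has empty interior
  have hFint : ∀ m J, interior (F m J) = ∅ := by
    intro m J
    by_contra hne
    obtain ⟨x, hx⟩ := nonempty_iff_ne_empty.2 hne
    set U := interior (F m J) with hU
    have hUopen : IsOpen U := isOpen_interior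
    have hUpos : 0 < μ U := hUopen.measure_pos μ ⟨x, hx⟩
    set c : ℝ := ((m : ℝ) + 1)⁻¹ with hc
    have hcpos : (0 : ℝ) < c := by positivity
    set δ : ENNReal := eLpNorm (U.indicator fun _ => (c : ℂ)) 2 μ with hδ
    have hδeq : δ = (‖(c : ℂ)‖₊ : ENNReal) * μ U ^ (1 / (2 : ENNReal).toReal) :=
      eLpNorm_indicator_const hUopen.measurableSet (by norm_num) (by norm_num)
    have hδpos : 0 < δ := by
      rw [hδeq]
      apply ENNReal.mul_pos
      · simp only [ne_eq, ENNReal.coe_eq_zero, nnnorm_eq_zero, Complex.ofReal_eq_zero]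
        exact hcpos.ne'
      · exact (ENNReal.rpow_pos hUpos (measure_ne_top μ U)).ne'
    -- pick j ≥ J with small L² norm
    obtain ⟨j, hjJ, hjlt⟩ : ∃ j, J ≤ j ∧
        eLpNorm (fun t => partialSum (n j) ⇑f t - f t) 2 μ < δ := by
      have := (hL2.eventually_lt_const hδpos).and (eventually_ge_atTop J)
      obtain ⟨j, hj1, hj2⟩ := this.exists
      exact ⟨j, hj2, hj1⟩
    -- but the indicator lower bound contradicts this
    have hge : δ ≤ eLpNorm (fun t => partialSum (n j) ⇑f t - f t) 2 μ := by
      apply eLpNorm_mono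
      intro t
      by_cases ht : t ∈ U
      · rw [Set.indicator_of_mem ht]
        have := (interior_subset ht : t ∈ F m J) j hjJ
        simpa [abs_of_pos hcpos] using this
      · rw [Set.indicator_of_notMem ht]
        simp
    exact absurd hjlt (not_lt.2 hge)
  -- the target set is contained in the union
  have hsub : {t | t ∈ A ∧ h t ≠ f t} ⊆ ⋃ m, ⋃ J, F m J := by
    rintro t ⟨htA, hth⟩
    have hlim := hconv t htA
    have hpos : 0 < ‖h t - f t‖ / 2 := by
      have : (0:ℝ) < ‖h t - f t‖ := norm_sub_pos_iff.mpr hth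
      linarith
    obtain ⟨m, hm⟩ := exists_nat_gt (‖h t - f t‖ / 2)⁻¹
    have hmc : ((m : ℝ) + 1)⁻¹ ≤ ‖h t - f t‖ / 2 := by
      rw [inv_le_comm₀ (by positivity) hpos]
      exact le_of_lt (hm.trans (by linarith))
    have hnorm : Tendsto (fun j => ‖partialSum (n j) ⇑f t - f t‖) atTop
        (𝓝 ‖h t - f t‖) := (hlim.sub_const (f t)).norm
    have hev : ∀ᶠ j in atTop, ‖h t - f t‖ / 2 ≤ ‖partialSum (n j) ⇑f t - f t‖ :=
      hnorm.eventually_const_le (by linarith)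
    obtain ⟨J, hJ⟩ := hev.exists_forall_of_atTop
    exact mem_iUnion.2 ⟨m, mem_iUnion.2 ⟨J, fun j hj => hmc.trans (hJ j hj)⟩⟩
  refine IsMeagre.mono hsub ?_
  exact isMeagre_iUnion fun m => isMeagre_iUnion fun J =>
    isMeagre_of_closed_empty_interior (hFclosed m J) (hFint m J)

end
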